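/- Let n ≥ 1 and let S be a Sperner family on {1,…,n} with module h_S. Then the derivative of the polynomial h_S satisfies h_S′(0) = |⋂_{A ∈ S} A| and h_S′(1) = #{A ∈ S : |A| = 1}. Moreover, if S does not consist of just one singleton, then h_S′(0) · h_S′(1) = 0. -/

import Mathlib

open MeasureTheory

/-- The Sperner statistic of a family `S` of subsets of `{1,…,n}`:
`H_S(x) = max_{A ∈ S} min_{i ∈ A} x_i`. -/
noncomputable def spernerStat {n : ℕ} (S : Finset (Finset (Fin n))) (hS : S.Nonempty)
    (hne : ∀ A ∈ S, A.Nonempty) (x : Fin n → ℝ) : ℝ :=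
  S.attach.sup' (Finset.attach_nonempty_iff.mpr hS)
    (fun A => A.1.inf' (hne A.1 A.2) x)

/- The module of a Sperner family:
`h_S(t) = Σ_{ε ∈ {0,1}^n, H_S(ε)=0} t^{z(ε)} (1−t)^{n−z(ε)}`, where `z(ε)` is the
number of zero coordinates of `ε`. -/
open scoped Classical in
noncomputable def spernerModule {n : ℕ} (S : Finset (Finset (Fin n))) (hS : S.Nonempty)
    (hne : ∀ A ∈ S, A.Nonempty) (t : ℝ) : ℝ :=
  ∑ ε : Fin n → Bool,
    if spernerStat S hS hne (fun i => if ε i then 1 else 0) = 0 then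
      t ^ (Finset.univ.filter fun i => ε i = false).card *
        (1 - t) ^ (n - (Finset.univ.filter fun i => ε i = false).card)
    else 0

open scoped Classical

namespace SpernerAux

variable {n : ℕ}

/-- number of `false` coordinates -/
def zc (ε : Fin n → Bool) : ℕ := (Finset.univ.filter fun i => ε i = false).card

lemma zc_le (ε : Fin n → Bool) : zc ε ≤ n := by
  simpa [zc] using (Finset.card_filter_le Finset.univ fun i => ε i = false)

variable (S : Finset (Finset (Fin n))) (hS : S.Nonempty) (hne : ∀ A ∈ S, A.Nonempty)

lemma stat_zero_iff (ε : Fin n → Bool) :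
    spernerStat S hS hne (fun i => if ε i then 1 else 0) = 0 ↔
      ∀ A ∈ S, ∃ i ∈ A, ε i = false := by
  set x : Fin n → ℝ := fun i => if ε i then 1 else 0 with hx
  have hx0 : ∀ i, 0 ≤ x i := by
    intro i
    by_cases h : ε i <;> simp [hx, h]
  constructor
  · intro h A hA
    by_contra hc
    push_neg at hc
    have hone : ∀ i ∈ A, (1:ℝ) ≤ x i := by
      intro i hi
      have : ε i = true := by
        cases hεi : ε i
        · exact absurd hεi (hc i hi)
        · rfl
      simp [hx, this]
    have h1 : (1:ℝ) ≤ A.inf' (hne A hA) x := Finset.le_inf' _ _ hone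
    have h2 : A.inf' (hne A hA) x ≤ spernerStat S hS hne x :=
      Finset.le_sup' (fun B : {B // B ∈ S} => B.1.inf' (hne B.1 B.2) x)
        (Finset.mem_attach S ⟨A, hA⟩)
    rw [h] at h2
    linarith
  · intro h
    apply le_antisymm
    · apply Finset.sup'_le
      rintro ⟨A, hA⟩ -
      obtain ⟨i, hi, hif⟩ := h A hA
      have : x i = 0 := by simp [hx, hif]
      calc A.inf' (hne A hA) x ≤ x i := Finset.inf'_le _ hi
        _ = 0 := this
    · obtain ⟨A, hA⟩ := id hS
      have h1 : (0:ℝ) ≤ A.inf' (hne A hA) x := Finset.le_inf' _ _ fun i _ => hx0 i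
      have h2 : A.inf' (hne A hA) x ≤ spernerStat S hS hne x :=
        Finset.le_sup' (fun B : {B // B ∈ S} => B.1.inf' (hne B.1 B.2) x)
          (Finset.mem_attach S ⟨A, hA⟩)
      linarith

lemma hasDerivAt_module (t : ℝ) : HasDerivAt (spernerModule S hS hne)
    (∑ ε : Fin n → Bool,
      if spernerStat S hS hne (fun i => if ε i then 1 else 0) = 0 then
        ((zc ε : ℝ) * t ^ (zc ε - 1) * (1 - t) ^ (n - zc ε)
          - ((n - zc ε : ℕ) : ℝ) * t ^ zc ε * (1 - t) ^ (n - zc ε - 1))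
      else 0) t := by
  unfold spernerModule
  apply HasDerivAt.fun_sum
  intro ε _
  by_cases h : spernerStat S hS hne (fun i => if ε i then 1 else 0) = 0
  · simp only [if_pos h]
    have h1 := hasDerivAt_pow (zc ε) t
    have h2 : HasDerivAt (fun t : ℝ => (1-t)^(n - zc ε))
        (-((n - zc ε : ℕ) * (1-t)^(n - zc ε - 1))) t := by
      have := (hasDerivAt_pow (n - zc ε) (1-t)).comp t
        ((hasDerivAt_const t (1:ℝ)).sub (hasDerivAt_id t))
      simp at this
      exact this
    have := h1.fun_mul h2
    show HasDerivAt (fun t : ℝ => t ^ zc ε * (1 - t) ^ (n - zc ε)) _ t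
    exact this.congr_deriv (by ring)
  · simp only [if_neg h]
    exact hasDerivAt_const t 0

lemma cond_zc_ne_zero (ε : Fin n → Bool)
    (h : spernerStat S hS hne (fun i => if ε i then 1 else 0) = 0) : zc ε ≠ 0 := by
  obtain ⟨A, hA⟩ := id hS
  obtain ⟨i, hi, hif⟩ := (stat_zero_iff S hS hne ε).mp h A hA
  have : i ∈ Finset.univ.filter fun j => ε j = false := by simp [hif]
  intro hz
  rw [zc, Finset.card_eq_zero] at hz
  rw [hz] at this
  simp at this

end SpernerAux

open SpernerAux in
/-- Derivatives of the module of a Sperner family at `0` and `1`: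
`h_S′(0) = |⋂_{A ∈ S} A|`, `h_S′(1) = #{A ∈ S : |A| = 1}`, and if `S` does not consist
of just one singleton then `h_S′(0) · h_S′(1) = 0`. -/
theorem sperner_module_derivatives_at_endpoints
    (n : ℕ) (hn : 1 ≤ n) (S : Finset (Finset (Fin n))) (hS : S.Nonempty)
    (hne : ∀ A ∈ S, A.Nonempty) (hsp : ∀ A ∈ S, ∀ B ∈ S, A ⊆ B → A = B) :
    deriv (spernerModule S hS hne) 0 = ((S.inf' hS id).card : ℝ) ∧
    deriv (spernerModule S hS hne) 1 = ((S.filter fun A => A.card = 1).card : ℝ) ∧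
    ((¬ ∃ i : Fin n, S = {({i} : Finset (Fin n))}) →
      deriv (spernerModule S hS hne) 0 * deriv (spernerModule S hS hne) 1 = 0) := by
  set cond : (Fin n → Bool) → Prop :=
    fun ε => spernerStat S hS hne (fun i => if ε i then 1 else 0) = 0 with hcond
  -- derivative at 0
  have hd0 : deriv (spernerModule S hS hne) 0 = ((S.inf' hS id).card : ℝ) := by
    rw [(hasDerivAt_module S hS hne 0).deriv]
    have step1 : ∀ ε : Fin n → Bool,
        (if cond ε then
          ((zc ε : ℝ) * (0:ℝ) ^ (zc ε - 1) * (1 - 0) ^ (n - zc ε)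
            - ((n - zc ε : ℕ) : ℝ) * (0:ℝ) ^ zc ε * (1 - 0) ^ (n - zc ε - 1))
        else 0) = if cond ε ∧ zc ε = 1 then (1:ℝ) else 0 := by
      intro ε
      by_cases hc : cond ε
      · have hz0 : zc ε ≠ 0 := cond_zc_ne_zero S hS hne ε hc
        obtain h1 | h2 : zc ε = 1 ∨ 2 ≤ zc ε := by omega
        · simp [hc, h1]
        · have e1 : (0:ℝ) ^ (zc ε - 1) = 0 := zero_pow (by omega)
          have e2 : (0:ℝ) ^ zc ε = 0 := zero_pow (by omega)
          have : ¬ (cond ε ∧ zc ε = 1) := by rintro ⟨-, h⟩; omega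
          simp [hc, this, e1, e2]
          omega
      · simp [hc]
    rw [Finset.sum_congr rfl fun ε _ => step1 ε, Finset.sum_boole]
    congr 1
    have himg : (Finset.univ.filter fun ε : Fin n → Bool => cond ε ∧ zc ε = 1) =
        (S.inf' hS id).image (fun i => fun j => !decide (j = i)) := by
      ext ε
      simp only [Finset.mem_filter, Finset.mem_univ, true_and, Finset.mem_image]
      rw [Finset.inf'_eq_inf hS id]
      constructor
      · rintro ⟨hc, hz⟩
        rw [zc, Finset.card_eq_one] at hz
        obtain ⟨i, hi⟩ := hz
        have hmemi : ε i = false := by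
          have : i ∈ Finset.univ.filter fun j => ε j = false := hi ▸ Finset.mem_singleton_self i
          simpa using this
        refine ⟨i, ?_, ?_⟩
        · rw [Finset.mem_inf]
          intro A hA
          obtain ⟨j, hj, hjf⟩ := (stat_zero_iff S hS hne ε).mp hc A hA
          have : j ∈ ({i} : Finset (Fin n)) := by rw [← hi]; simp [hjf]
          simp only [Finset.mem_singleton] at this
          simpa [this] using hj
        · funext j
          by_cases hji : j = i
          · simp [hji, hmemi]
          · have : ε j = true := by
              cases hεj : ε j
              · have : j ∈ ({i} : Finset (Fin n)) := by rw [← hi]; simp [hεj]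
                simp only [Finset.mem_singleton] at this
                exact absurd this hji
              · rfl
            simp [hji, this]
      · rintro ⟨i, hi, rfl⟩
        rw [Finset.mem_inf] at hi
        have hfil : (Finset.univ.filter fun j => (!decide (j = i)) = false) = {i} := by
          ext j; simp
        constructor
        · refine (stat_zero_iff S hS hne _).mpr fun A hA => ⟨i, hi A hA, by simp⟩
        · rw [zc, hfil, Finset.card_singleton]
    rw [himg, Finset.card_image_of_injective]
    intro i i' h
    have h' : i' = i := by simpa using congrFun h i'
    exact h'.symm
  -- derivative at 1
  have hsing : (S.filter fun A => A.card = 1) =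
      (Finset.univ.filter fun i : Fin n => ({i} : Finset (Fin n)) ∈ S).image
        (fun i => ({i} : Finset (Fin n))) := by
    ext A
    simp only [Finset.mem_filter, Finset.mem_image, Finset.mem_univ, true_and]
    constructor
    · rintro ⟨hA, hc⟩
      obtain ⟨i, rfl⟩ := Finset.card_eq_one.mp hc
      exact ⟨i, hA, rfl⟩
    · rintro ⟨i, hi, rfl⟩
      exact ⟨hi, Finset.card_singleton i⟩
  have hsingcard : (S.filter fun A => A.card = 1).card =
      (Finset.univ.filter fun i : Fin n => ({i} : Finset (Fin n)) ∈ S).card := by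
    rw [hsing, Finset.card_image_of_injective _ Finset.singleton_injective]
  have hd1 : deriv (spernerModule S hS hne) 1 = ((S.filter fun A => A.card = 1).card : ℝ) := by
    rw [(hasDerivAt_module S hS hne 1).deriv]
    have step1 : ∀ ε : Fin n → Bool,
        (if cond ε then
          ((zc ε : ℝ) * (1:ℝ) ^ (zc ε - 1) * (1 - 1) ^ (n - zc ε)
            - ((n - zc ε : ℕ) : ℝ) * (1:ℝ) ^ zc ε * (1 - 1) ^ (n - zc ε - 1))
        else 0) =
        (if cond ε ∧ zc ε = n then (n:ℝ) else 0)
          + (if cond ε ∧ zc ε = n - 1 then (-1:ℝ) else 0) := by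
      intro ε
      have hzle := zc_le ε
      by_cases hc : cond ε
      · have hz0 : zc ε ≠ 0 := cond_zc_ne_zero S hS hne ε hc
        obtain h1 | h2 | h3 : zc ε = n ∨ (zc ε = n - 1 ∧ zc ε ≠ n) ∨ zc ε + 2 ≤ n := by omega
        · have hne' : ¬ (cond ε ∧ zc ε = n - 1) := by rintro ⟨-, h⟩; omega
          have hz : n - zc ε = 0 := by omega
          rw [if_pos hc, if_pos ⟨hc, h1⟩, if_neg hne', hz, h1]
          norm_num
        · have hne' : ¬ (cond ε ∧ zc ε = n) := by rintro ⟨-, h⟩; exact h2.2 h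
          have h4 : n - zc ε = 1 := by omega
          rw [if_pos hc, if_neg hne', if_pos ⟨hc, h2.1⟩, h4]
          norm_num
        · have e1 : ((1:ℝ) - 1) ^ (n - zc ε) = 0 := by
            rw [sub_self]; exact zero_pow (by omega)
          have e2 : ((1:ℝ) - 1) ^ (n - zc ε - 1) = 0 := by
            rw [sub_self]; exact zero_pow (by omega)
          have hne1 : ¬ (cond ε ∧ zc ε = n) := by rintro ⟨-, h⟩; omega
          have hne2 : ¬ (cond ε ∧ zc ε = n - 1) := by rintro ⟨-, h⟩; omega
          rw [if_pos hc, if_neg hne1, if_neg hne2, e1, e2]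
          ring
      · simp [hc]
    rw [Finset.sum_congr rfl fun ε _ => step1 ε, Finset.sum_add_distrib]
    have hf1 : (Finset.univ.filter fun ε : Fin n → Bool => cond ε ∧ zc ε = n) =
        {fun _ => false} := by
      ext ε
      simp only [Finset.mem_filter, Finset.mem_univ, true_and, Finset.mem_singleton]
      constructor
      · rintro ⟨-, hz⟩
        have heq : (Finset.univ.filter fun j => ε j = false) = Finset.univ :=
          Finset.eq_univ_of_card _ (by simpa [zc] using hz)
        rw [Finset.eq_univ_iff_forall] at heq
        funext j
        simpa using heq j
      · rintro rfl
        constructor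
        · refine (stat_zero_iff S hS hne _).mpr fun A hA => ?_
          obtain ⟨i, hi⟩ := hne A hA
          exact ⟨i, hi, rfl⟩
        · simp [zc]
    have hf2 : (Finset.univ.filter fun ε : Fin n → Bool => cond ε ∧ zc ε = n - 1) =
        (Finset.univ.filter fun i : Fin n => ({i} : Finset (Fin n)) ∉ S).image
          (fun i => fun j => decide (j = i)) := by
      ext ε
      simp only [Finset.mem_filter, Finset.mem_univ, true_and, Finset.mem_image]
      constructor
      · rintro ⟨hc, hz⟩
        have hcompl : (Finset.univ.filter fun j => ε j = true) =
            Finset.univ \ (Finset.univ.filter fun j => ε j = false) := by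
          ext j; cases hεj : ε j <;> simp [hεj]
        have hcard1 : (Finset.univ.filter fun j => ε j = true).card = 1 := by
          rw [hcompl, Finset.card_sdiff_of_subset (Finset.filter_subset _ _)]
          have : (Finset.univ.filter fun j => ε j = false).card = n - 1 := by
            simpa [zc] using hz
          rw [this]
          simp
          omega
        obtain ⟨i, hi⟩ := Finset.card_eq_one.mp hcard1
        have hmemi : ε i = true := by
          have : i ∈ Finset.univ.filter fun j => ε j = true := hi ▸ Finset.mem_singleton_self i
          simpa using this
        have hεeq : ε = fun j => decide (j = i) := by
          funext j
          by_cases hji : j = i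
          · simp [hji, hmemi]
          · have : ε j = false := by
              cases hεj : ε j
              · rfl
              · have : j ∈ ({i} : Finset (Fin n)) := by rw [← hi]; simp [hεj]
                simp only [Finset.mem_singleton] at this
                exact absurd this hji
            simp [hji, this]
        refine ⟨i, ?_, hεeq.symm⟩
        intro hiS
        obtain ⟨j, hj, hjf⟩ := (stat_zero_iff S hS hne ε).mp hc {i} hiS
        simp only [Finset.mem_singleton] at hj
        rw [hj, hmemi] at hjf
        exact Bool.noConfusion hjf
      · rintro ⟨i, hiS, rfl⟩
        constructor
        · refine (stat_zero_iff S hS hne _).mpr fun A hA => ?_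
          by_contra hcon
          push_neg at hcon
          have hsub : A ⊆ {i} := by
            intro j hj
            have := hcon j hj
            simp only [Finset.mem_singleton]
            by_contra hji
            simp [hji] at this
          have : A = {i} := by
            rcases Finset.subset_singleton_iff.mp hsub with h | h
            · exact absurd h (Finset.nonempty_iff_ne_empty.mp (hne A hA))
            · exact h
          exact hiS (this ▸ hA)
        · have herase : (Finset.univ.filter fun j => decide (j = i) = false) =
              Finset.univ.erase i := by
            ext j
            simp only [Finset.mem_filter, Finset.mem_univ, true_and, Finset.mem_erase,
              decide_eq_false_iff_not, and_true]
          rw [zc, herase, Finset.card_erase_of_mem (Finset.mem_univ i)]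
          simp
    have hinj2 : Function.Injective (fun i : Fin n => fun j : Fin n => decide (j = i)) := by
      intro i i' h
      have := congrFun h i
      simpa using this
    have e1 : (∑ ε : Fin n → Bool, if cond ε ∧ zc ε = n then (n:ℝ) else 0) = (n:ℝ) := by
      rw [← Finset.sum_filter, hf1, Finset.sum_singleton]
    have e2 : (∑ ε : Fin n → Bool, if cond ε ∧ zc ε = n - 1 then (-1:ℝ) else 0)
        = -((Finset.univ.filter fun i : Fin n => ({i} : Finset (Fin n)) ∉ S).card : ℝ) := by
      rw [← Finset.sum_filter, hf2, Finset.sum_const, Finset.card_image_of_injective _ hinj2]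
      simp
    rw [e1, e2]
    have hkm := Finset.card_filter_add_card_filter_not
      (s := (Finset.univ : Finset (Fin n)))
      (p := fun i : Fin n => ({i} : Finset (Fin n)) ∈ S)
    simp only [Finset.card_univ, Fintype.card_fin] at hkm
    rw [hsingcard]
    have h1 : ((Finset.univ.filter fun i : Fin n => ({i} : Finset (Fin n)) ∈ S).card : ℝ)
        + ((Finset.univ.filter fun i : Fin n => ¬ ({i} : Finset (Fin n)) ∈ S).card : ℝ)
        = n := by exact_mod_cast hkm
    linarith
  refine ⟨hd0, hd1, ?_⟩
  intro hnot
  by_contra hprod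
  have h0 : deriv (spernerModule S hS hne) 0 ≠ 0 := fun h => hprod (by rw [h, zero_mul])
  have h1 : deriv (spernerModule S hS hne) 1 ≠ 0 := fun h => hprod (by rw [h, mul_zero])
  rw [hd0] at h0
  rw [hd1] at h1
  have hint : (S.inf' hS id).Nonempty :=
    Finset.card_pos.mp (Nat.pos_of_ne_zero (Nat.cast_ne_zero.mp h0))
  obtain ⟨i, hi⟩ := hint
  rw [Finset.inf'_eq_inf hS id, Finset.mem_inf] at hi
  have hfil : (S.filter fun A => A.card = 1).Nonempty :=
    Finset.card_pos.mp (Nat.pos_of_ne_zero (Nat.cast_ne_zero.mp h1))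
  obtain ⟨A, hA⟩ := hfil
  rw [Finset.mem_filter] at hA
  obtain ⟨j, rfl⟩ := Finset.card_eq_one.mp hA.2
  have hij : i = j := by
    have := hi _ hA.1
    simpa using this
  apply hnot
  refine ⟨j, ?_⟩
  apply Finset.eq_singleton_iff_unique_mem.mpr
  refine ⟨hA.1, ?_⟩
  intro B hB
  have hsub : ({j} : Finset (Fin n)) ⊆ B := by
    simp only [Finset.singleton_subset_iff]
    exact hij ▸ hi B hB
  exact (hsp _ hA.1 B hB hsub).symm
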